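/- For every positive integer m, ∑_{n=1}^∞ ∑_{k=1}^{m} (-1)^{k+1} P(2m, 2k-1) · 2^{2m+1} · (-1)^n/(n^{2k} π^{2k}) = −2^{2m}/(2m+1), where P(n,r) = n!/(n-r)!. -/

import Mathlib

open Real Finset Polynomial Nat

section Aux



theorem evalB (n : ℕ) (x : ℚ) : (Polynomial.bernoulli n).eval x
    = ∑ i ∈ range (n+1), _root_.bernoulli i * n.choose i * x^(n-i) := by
  rw [Polynomial.bernoulli, eval_finset_sum]
  simp [eval_monomial, mul_assoc]

theorem sumA (n : ℕ) : ∑ k ∈ range (n+1), ((n+1).choose k : ℚ) * ((2 - 2^k)/2^k * _root_.bernoulli k)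
    = (n+1) * (1/2)^n := by
  have h1 : ∀ k, (((n+1).choose k : ℚ)) * ((2 - 2^k)/2^k * _root_.bernoulli k)
      = 2*(((n+1).choose k : ℚ) * ((1/2)^k * _root_.bernoulli k)) - ((n+1).choose k : ℚ) * _root_.bernoulli k := by
    intro k
    have : (2:ℚ)^k ≠ 0 := by positivity
    field_simp
    have h3 : ((1:ℚ)/2)^k * 2^k = 1 := by rw [← mul_pow]; norm_num
    linear_combination (-(((n + 1).choose k : ℚ) * _root_.bernoulli k * 2)) * h3
  simp_rw [h1]
  rw [Finset.sum_sub_distrib, ← Finset.mul_sum, _root_.sum_bernoulli (n+1)]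
  have hev : (Polynomial.bernoulli (n+1)).eval 2
      = 2^(n+1) * (∑ i ∈ range (n+2), ((n+1).choose i : ℚ) * ((1/2)^i * _root_.bernoulli i)) := by
    rw [evalB, Finset.mul_sum]
    refine Finset.sum_congr rfl fun i hi => ?_
    rw [Finset.mem_range] at hi
    have hle : i ≤ n + 1 := by omega
    have h2 : (2:ℚ)^(n+1-i) * 2^i = 2^(n+1) := by
      rw [← pow_add, Nat.sub_add_cancel hle]
    have hi0 : (2:ℚ)^i ≠ 0 := by positivity
    have : (2:ℚ)^(n+1-i) = 2^(n+1) * (1/2)^i := by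
      rw [div_pow, one_pow, ← h2]
      field_simp
    rw [this]; ring
  have hev2 : (Polynomial.bernoulli (n+1)).eval 2 = bernoulli' (n+1) + (n+1) := by
    have h := Polynomial.bernoulli_eval_one_add (n+1) 1
    norm_num at h
    exact h
  rw [Finset.sum_range_succ] at hev
  rw [hev2] at hev
  simp only [Nat.choose_self, Nat.cast_one, one_mul] at hev
  have hp : (2:ℚ)^(n+1) ≠ 0 := by positivity
  have hhalf : ((1:ℚ)/2)^(n+1) * 2^(n+1) = 1 := by
    rw [div_pow, one_pow]; field_simp
  have hhalf2 : ((1:ℚ)/2)^n * 2^(n+1) = 2 := by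
    rw [div_pow, one_pow, pow_succ]
    field_simp
  rcases Nat.eq_zero_or_pos n with rfl | hn
  · norm_num [bernoulli'_one] at hev ⊢
  · rw [if_neg (by omega)]
    rw [bernoulli_eq_bernoulli'_of_ne_one (show n+1 ≠ 1 by omega)] at hev
    have goal2 : (2 * ∑ k ∈ range (n + 1), ((n+1).choose k : ℚ) * ((1/2)^k * _root_.bernoulli k) - 0) * 2^(n+1)
        = (((n:ℚ)+1) * (1/2)^n) * 2^(n+1) := by
      linear_combination (-2)*hev + (-2*bernoulli' (n+1))*hhalf + (-((n:ℚ)+1))*hhalf2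
    have := mul_right_cancel₀ hp goal2
    push_cast at this ⊢
    linarith

theorem bernoulli_eval_one_half (n : ℕ) :
    (Polynomial.bernoulli n).eval (1/2 : ℚ) = (2 - 2^n)/2^n * _root_.bernoulli n := by
  induction n using Nat.strong_induction_on with
  | _ n ih =>
  have hrec : ∑ k ∈ range (n+1), ((n+1).choose k : ℚ) * (Polynomial.bernoulli k).eval (1/2)
      = (n+1) * (1/2)^n := by
    have h := congrArg (Polynomial.eval ((1:ℚ)/2)) (Polynomial.sum_bernoulli n)
    simp only [eval_finset_sum, eval_smul, smul_eq_mul, eval_monomial] at h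
    convert h using 2
  rw [Finset.sum_range_succ] at hrec
  have hA := sumA n
  rw [Finset.sum_range_succ] at hA
  have heq : ∑ x ∈ range n, ((n+1).choose x : ℚ) * (Polynomial.bernoulli x).eval (1/2)
      = ∑ x ∈ range n, ((n+1).choose x : ℚ) * ((2 - 2^x)/2^x * _root_.bernoulli x) :=
    Finset.sum_congr rfl fun x hx => by rw [ih x (Finset.mem_range.1 hx)]
  rw [heq] at hrec
  rw [Nat.choose_succ_self_right] at hrec hA
  have hne : ((n:ℚ)+1) ≠ 0 := by positivity
  apply mul_left_cancel₀ hne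
  push_cast at hrec hA ⊢
  linarith

theorem split2 (f : ℕ → ℚ) (n : ℕ) :
    ∑ j ∈ range (2*n), f j = ∑ i ∈ range n, (f (2*i) + f (2*i+1)) := by
  induction n with
  | zero => simp
  | succ n ih =>
    rw [Finset.sum_range_succ, ← ih, Nat.mul_succ, Finset.sum_range_succ, Finset.sum_range_succ]
    ring_nf

theorem bernoulli_odd (n : ℕ) (h1 : Odd n) (h2 : 1 < n) : _root_.bernoulli n = 0 := by
  rw [bernoulli_eq_bernoulli'_of_ne_one (by omega), bernoulli'_eq_zero_of_odd h1 h2]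

theorem keyQ (m : ℕ) (hm : 0 < m) :
    ∑ k ∈ Icc 1 m, ((2*m+1).choose (2*k) : ℚ) * 2^(2*k) * (Polynomial.bernoulli (2*k)).eval (1/2)
      = -1 := by
  set h : ℕ → ℚ := fun j => ((2*m+1).choose j : ℚ) * (2 - 2^j) * _root_.bernoulli j with hh
  have hterm : ∀ k ∈ Icc 1 m,
      ((2*m+1).choose (2*k) : ℚ) * 2^(2*k) * (Polynomial.bernoulli (2*k)).eval (1/2) = h (2*k) := by
    intro k _
    rw [bernoulli_eval_one_half, hh]
    have : (2:ℚ)^(2*k) ≠ 0 := by positivity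
    field_simp
  rw [Finset.sum_congr rfl hterm]
  -- full sum over range (2m+2) is zero
  have hS1 : ∑ j ∈ range (2*m+2), ((2*m+1).choose j : ℚ) * _root_.bernoulli j = 0 := by
    have h0 := _root_.sum_bernoulli (2*m+1)
    rw [if_neg (by omega)] at h0
    rw [show 2*m+2 = (2*m+1)+1 by ring, Finset.sum_range_succ, h0,
      bernoulli_odd (2*m+1) ⟨m, by ring⟩ (by omega)]
    simp
  have hS2 : ∑ j ∈ range (2*m+2), ((2*m+1).choose j : ℚ) * 2^j * _root_.bernoulli j = 0 := by
    have he := bernoulli_eval_one_half (2*m+1)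
    rw [bernoulli_odd (2*m+1) ⟨m, by ring⟩ (by omega), mul_zero] at he
    have hev : (Polynomial.bernoulli (2*m+1)).eval (1/2 : ℚ)
        = ∑ i ∈ range (2*m+2), _root_.bernoulli i * (2*m+1).choose i * (1/2:ℚ)^(2*m+1-i) := by
      rw [Polynomial.bernoulli, eval_finset_sum]
      simp [eval_monomial, mul_assoc]
    rw [he] at hev
    have := congrArg (fun x : ℚ => 2^(2*m+1) * x) hev.symm
    simp only [mul_zero] at this
    rw [Finset.mul_sum] at this
    rw [← this]
    refine Finset.sum_congr rfl fun i hi => ?_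
    rw [Finset.mem_range] at hi
    have hle : i ≤ 2*m+1 := by omega
    have h2 : (2:ℚ)^(2*m+1-i) * 2^i = 2^(2*m+1) := by rw [← pow_add, Nat.sub_add_cancel hle]
    have hi0 : ((2:ℚ)/2^i) ≠ 0 := by positivity
    have : (1/2:ℚ)^(2*m+1-i) = 2^i / 2^(2*m+1) := by
      rw [div_pow, one_pow, eq_div_iff (by positivity), ← h2]
      have : (2:ℚ)^(2*m+1-i) ≠ 0 := by positivity
      field_simp
    rw [this]
    have hp : (2:ℚ)^(2*m+1) ≠ 0 := by positivity
    field_simp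
  have hfull : ∑ j ∈ range (2*m+2), h j = 0 := by
    have : ∀ j, h j = 2 * (((2*m+1).choose j : ℚ) * _root_.bernoulli j)
        - ((2*m+1).choose j : ℚ) * 2^j * _root_.bernoulli j := by
      intro j; rw [hh]; ring
    simp_rw [this]
    rw [Finset.sum_sub_distrib, ← Finset.mul_sum, hS1, hS2]
    ring
  rw [show 2*m+2 = 2*(m+1) by ring, split2] at hfull
  have hodd : ∀ i ∈ range (m+1), h (2*i) + h (2*i+1) = h (2*i) := by
    intro i _
    have : h (2*i+1) = 0 := by
      rcases Nat.eq_zero_or_pos i with rfl | hi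
      · simp [hh]
      · rw [hh]
        simp only
        rw [bernoulli_odd (2*i+1) ⟨i, by ring⟩ (by omega)]
        ring
    rw [this, add_zero]
  rw [Finset.sum_congr rfl hodd] at hfull
  rw [Finset.sum_range_succ'] at hfull
  have h0 : h 0 = 1 := by simp [hh]; norm_num
  have hIcc : ∑ k ∈ Icc 1 m, h (2*k) = ∑ i ∈ range m, h (2*(i+1)) := by
    rw [← Finset.Ico_add_one_right_eq_Icc, ← Finset.sum_Ico_add' (fun x => h (2*x)) 0 m (c := 1),
      ← Finset.range_eq_Ico]
  rw [hIcc]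
  simp only [Nat.mul_zero] at hfull
  rw [h0] at hfull
  linarith

theorem alt_hasSum (k : ℕ) (hk : k ≠ 0) :
    HasSum (fun n : ℕ => (-1 : ℝ) ^ (n + 1) / ((n : ℝ) + 1) ^ (2 * k))
      ((-1 : ℝ) ^ (k + 1) * (2 * π) ^ (2 * k) / 2 / (2 * k)! *
        (Rat.cast ((Polynomial.bernoulli (2 * k)).eval (1/2 : ℚ)) : ℝ)) := by
  have h := hasSum_one_div_nat_pow_mul_cos hk (x := 1/2)
    (by constructor <;> norm_num)
  have hmap : (Polynomial.map (algebraMap ℚ ℝ) (Polynomial.bernoulli (2 * k))).eval (1/2 : ℝ)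
      = (Rat.cast ((Polynomial.bernoulli (2 * k)).eval (1/2 : ℚ)) : ℝ) := by
    have : (1/2 : ℝ) = algebraMap ℚ ℝ (1/2 : ℚ) := by norm_num
    rw [this, Polynomial.eval_map, Polynomial.eval₂_at_apply]
    rfl
  rw [hmap] at h
  have hfun : (fun n : ℕ => 1 / (n : ℝ) ^ (2 * k) * Real.cos (2 * π * n * (1/2)))
      = fun n : ℕ => (-1 : ℝ) ^ n / (n : ℝ) ^ (2 * k) := by
    funext n
    have : 2 * π * n * (1/2) = 0 + n * π := by ring
    rw [this, Real.cos_add_nat_mul_pi, Real.cos_zero]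
    ring
  rw [hfun] at h
  have h0 : ((-1 : ℝ) ^ (0:ℕ) / ((0:ℕ) : ℝ) ^ (2 * k)) = 0 := by
    rw [Nat.cast_zero, zero_pow (by omega), div_zero]
  set L : ℝ := (-1 : ℝ) ^ (k + 1) * (2 * π) ^ (2 * k) / 2 / (2 * k)! *
      (Rat.cast ((Polynomial.bernoulli (2 * k)).eval (1/2 : ℚ)) : ℝ) with hL
  have h2 : HasSum (fun n : ℕ => (-1 : ℝ) ^ (n+1) / ((n:ℝ)+1) ^ (2 * k)) L := by
    have := (hasSum_nat_add_iff
      (f := fun n : ℕ => (-1 : ℝ) ^ n / (n : ℝ) ^ (2 * k)) (g := L) 1).mpr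
      (by rw [Finset.sum_range_one, h0, add_zero]; exact h)
    convert this using 2 with n
    · rfl
    push_cast
    ring_nf
  exact h2


theorem mainsum (m : ℕ) (hm : 0 < m) :
    ∑ k ∈ Finset.Icc 1 m,
      ((-1 : ℝ) ^ (k + 1) * ((2 * m).descFactorial (2 * k - 1) : ℝ) * 2 ^ (2 * m + 1) *
        (((-1 : ℝ) ^ (k + 1) * (2 * π) ^ (2 * k) / 2 / (2 * k)! *
          (Rat.cast ((Polynomial.bernoulli (2 * k)).eval (1/2 : ℚ)) : ℝ)) / π ^ (2 * k)))
      = -(2 ^ (2 * m)) / (2 * (m : ℝ) + 1) := by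
  have hstep : ∀ k ∈ Finset.Icc 1 m,
      ((-1 : ℝ) ^ (k + 1) * ((2 * m).descFactorial (2 * k - 1) : ℝ) * 2 ^ (2 * m + 1) *
        (((-1 : ℝ) ^ (k + 1) * (2 * π) ^ (2 * k) / 2 / (2 * k)! *
          (Rat.cast ((Polynomial.bernoulli (2 * k)).eval (1/2 : ℚ)) : ℝ)) / π ^ (2 * k)))
      = (2 ^ (2 * m) / (2 * (m : ℝ) + 1)) *
          (((2*m+1).choose (2*k) : ℝ) * 2 ^ (2*k) *
            (Rat.cast ((Polynomial.bernoulli (2 * k)).eval (1/2 : ℚ)) : ℝ)) := by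
    intro k hk
    rw [Finset.mem_Icc] at hk
    have hfactN : (2*m+1).choose (2*k) * (2*k)! = (2*m+1) * (2*m).descFactorial (2*k-1) := by
      have h1 : (2*m+1).choose (2*k) * (2*k)! = (2*m+1).descFactorial (2*k) := by
        rw [Nat.descFactorial_eq_factorial_mul_choose]; ring
      have h2 : (2*m+1).descFactorial (2*k) = (2*m+1) * (2*m).descFactorial (2*k-1) := by
        conv_lhs => rw [show 2*k = (2*k-1)+1 by omega, Nat.succ_descFactorial_succ]
      rw [h1, h2]
    have hfact : ((2*m+1).choose (2*k) : ℝ) * ((2*k)! : ℝ)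
        = (2*(m:ℝ)+1) * ((2*m).descFactorial (2*k-1) : ℝ) := by
      exact_mod_cast congrArg (Nat.cast (R := ℝ)) hfactN
    have hneg : ((-1 : ℝ) ^ (k+1)) * ((-1 : ℝ) ^ (k+1)) = 1 := by
      rw [← pow_add]
      exact Even.neg_one_pow ⟨k+1, by ring⟩
    have hpi : (π : ℝ) ^ (2*k) ≠ 0 := pow_ne_zero _ pi_ne_zero
    have hf0 : ((2*k)! : ℝ) ≠ 0 := by exact_mod_cast Nat.factorial_ne_zero (2*k)
    have hm1 : (2*(m:ℝ)+1) ≠ 0 := by positivity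
    rw [mul_pow]
    field_simp
    linear_combination
      (2^(2*m+1) * (Rat.cast ((Polynomial.bernoulli (2 * k)).eval (1/2 : ℚ)) : ℝ)
        * ((2*m).descFactorial (2*k-1) : ℝ) * (2*(m:ℝ)+1)) * hneg
      - (2^(2*m+1)
        * (Rat.cast ((Polynomial.bernoulli (2 * k)).eval (1/2 : ℚ)) : ℝ)) * hfact
  rw [Finset.sum_congr rfl hstep, ← Finset.mul_sum]
  have hcast : ∑ k ∈ Finset.Icc 1 m, (((2*m+1).choose (2*k) : ℝ) * 2 ^ (2*k) *
      (Rat.cast ((Polynomial.bernoulli (2 * k)).eval (1/2 : ℚ)) : ℝ)) = -1 := by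
    have := keyQ m hm
    have hc := congrArg (Rat.cast (K := ℝ)) this
    push_cast at hc
    convert hc using 2
  rw [hcast]
  ring

end Aux

theorem fourier_at_zero (m : ℕ) (hm : 0 < m) :
    ∑' n : ℕ,
        ∑ k ∈ Finset.Icc 1 m,
          (-1 : ℝ) ^ (k + 1) * ((2 * m).descFactorial (2 * k - 1) : ℝ) * 2 ^ (2 * m + 1) *
            ((-1 : ℝ) ^ (n + 1) / (((n : ℝ) + 1) ^ (2 * k) * π ^ (2 * k)))
      = -(2 ^ (2 * m)) / (2 * (m : ℝ) + 1) := by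
  have hterm : ∀ k ∈ Finset.Icc 1 m, HasSum
      (fun n : ℕ => (-1 : ℝ) ^ (k + 1) * ((2 * m).descFactorial (2 * k - 1) : ℝ) * 2 ^ (2 * m + 1) *
        ((-1 : ℝ) ^ (n + 1) / (((n : ℝ) + 1) ^ (2 * k) * π ^ (2 * k))))
      ((-1 : ℝ) ^ (k + 1) * ((2 * m).descFactorial (2 * k - 1) : ℝ) * 2 ^ (2 * m + 1) *
        (((-1 : ℝ) ^ (k + 1) * (2 * π) ^ (2 * k) / 2 / (2 * k)! *
          (Rat.cast ((Polynomial.bernoulli (2 * k)).eval (1/2 : ℚ)) : ℝ)) / π ^ (2 * k))) := by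
    intro k hk
    rw [Finset.mem_Icc] at hk
    have h := ((alt_hasSum k (by omega)).div_const (π ^ (2*k))).mul_left
      ((-1 : ℝ) ^ (k + 1) * ((2 * m).descFactorial (2 * k - 1) : ℝ) * 2 ^ (2 * m + 1))
    convert h using 2 with n
    · rfl
    rw [div_div]
  rw [Summable.tsum_finsetSum (fun k hk => (hterm k hk).summable)]
  rw [Finset.sum_congr rfl (fun k hk => (hterm k hk).tsum_eq)]
  exact mainsum m hm
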